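/- Symbolic regex derivatives are correct: for every extended regular expression R modulo A and every element a ∈ D, the language of the leaf of the transition regex δ(R) for a equals the derivative of the language of R with respect to a: L(leaf(δ(R), a)) = {v | a·v ∈ L(R)}. -/

import Mathlib

open Classical

/-- An effective Boolean algebra over a domain `D` with predicates `P`. -/
structure EBA (D : Type*) (P : Type*) where
  den : P → Set D
  bot : P
  top : P
  band : P → P → P
  bor : P → P → P
  bnot : P → P
  den_bot : den bot = ∅
  den_top : den top = Set.univ
  den_and : ∀ α β, den (band α β) = den α ∩ den β
  den_or : ∀ α β, den (bor α β) = den α ∪ den β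
  den_not : ∀ α, den (bnot α) = (den α)ᶜ

/-- Transition terms over predicates `P` with leaves in `Φ`:
nested if-then-else expressions. -/
inductive TT (P : Type*) (Φ : Type*) where
  | leaf : Φ → TT P Φ
  | ite : P → TT P Φ → TT P Φ → TT P Φ

/-- The leaf of a transition term for an element `a` of the domain. -/
noncomputable def leafOf {D P Φ : Type*} (E : EBA D P) : TT P Φ → D → Φ
  | .leaf φ, _ => φ
  | .ite α f g, a => if a ∈ E.den α then leafOf E f a else leafOf E g a

/-- Lifting of a binary operation on leaves to transition terms. -/
def liftBin {P Φ Φ' : Type*} (op : Φ → Φ → Φ') : TT P Φ → TT P Φ → TT P Φ'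
  | .ite α f g, h => .ite α (liftBin op f h) (liftBin op g h)
  | .leaf φ, .ite α f g => .ite α (liftBin op (.leaf φ) f) (liftBin op (.leaf φ) g)
  | .leaf φ, .leaf ψ => .leaf (op φ ψ)

/-- Lifting of a unary operation on leaves to transition terms. -/
def liftUn {P Φ Φ' : Type*} (op : Φ → Φ') : TT P Φ → TT P Φ'
  | .leaf φ => .leaf (op φ)
  | .ite α f g => .ite α (liftUn op f) (liftUn op g)

/-- Extended regular expressions modulo an algebra of predicates `P`. -/
inductive ERE (P : Type*) where
  | pred : P → ERE P
  | eps : ERE P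
  | union : ERE P → ERE P → ERE P
  | inter : ERE P → ERE P → ERE P
  | concat : ERE P → ERE P → ERE P
  | star : ERE P → ERE P
  | compl : ERE P → ERE P

/-- The finite-word language of an extended regular expression, where
`den` is the denotation function of the predicate algebra. -/
def lang {D P : Type*} (den : P → Set D) : ERE P → Set (List D)
  | .pred α => {u | ∃ a ∈ den α, u = [a]}
  | .eps => {[]}
  | .union r s => lang den r ∪ lang den s
  | .inter r s => lang den r ∩ lang den s
  | .concat r s => {u | ∃ x ∈ lang den r, ∃ y ∈ lang den s, u = x ++ y}
  | .star r => {u | ∃ L : List (List D), (∀ x ∈ L, x ∈ lang den r) ∧ u = L.flatten}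
  | .compl r => (lang den r)ᶜ

/-- Nullability of an extended regular expression. -/
def nullable {P : Type*} : ERE P → Bool
  | .pred _ => false
  | .eps => true
  | .union r s => nullable r || nullable s
  | .inter r s => nullable r && nullable s
  | .concat r s => nullable r && nullable s
  | .star _ => true
  | .compl r => !nullable r

/-- The symbolic derivative of an extended regular expression:
a transition term with regex leaves. -/
noncomputable def derive {D P : Type*} (E : EBA D P) : ERE P → TT P (ERE P)
  | .eps => .leaf (.pred E.bot)
  | .pred α => .ite α (.leaf .eps) (.leaf (.pred E.bot))
  | .union r s => liftBin ERE.union (derive E r) (derive E s)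
  | .inter r s => liftBin ERE.inter (derive E r) (derive E s)
  | .compl r => liftUn ERE.compl (derive E r)
  | .star r => liftUn (fun t => ERE.concat t (.star r)) (derive E r)
  | .concat r s =>
    if nullable r then
      liftBin ERE.union (liftUn (fun t => ERE.concat t s) (derive E r)) (derive E s)
    else liftUn (fun t => ERE.concat t s) (derive E r)

lemma leafOf_liftBin {D P Φ Φ' : Type*} (E : EBA D P) (op : Φ → Φ → Φ')
    (f g : TT P Φ) (a : D) :
    leafOf E (liftBin op f g) a = op (leafOf E f a) (leafOf E g a) := by
  induction f generalizing g with
  | leaf φ =>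
    induction g with
    | leaf ψ => simp [liftBin, leafOf]
    | ite α f' g' ihf ihg =>
      simp only [liftBin, leafOf]
      split <;> simp [*, leafOf]
  | ite α f' g' ihf ihg =>
    simp only [liftBin, leafOf]
    split <;> simp [*, leafOf]

lemma leafOf_liftUn {D P Φ Φ' : Type*} (E : EBA D P) (op : Φ → Φ')
    (f : TT P Φ) (a : D) :
    leafOf E (liftUn op f) a = op (leafOf E f a) := by
  induction f with
  | leaf φ => rfl
  | ite α f' g' ihf ihg =>
    simp only [liftUn, leafOf]
    split <;> simp [*]

lemma nullable_iff {D P : Type*} (den : P → Set D) (R : ERE P) :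
    nullable R = true ↔ [] ∈ lang den R := by
  induction R with
  | pred α => simp [nullable, lang]
  | eps => simp [nullable, lang]
  | union r s ihr ihs => simp [nullable, lang, ihr, ihs]
  | inter r s ihr ihs => simp [nullable, lang, ihr, ihs]
  | concat r s ihr ihs =>
    simp only [nullable, Bool.and_eq_true, ihr, ihs, lang, Set.mem_setOf_eq]
    constructor
    · rintro ⟨h1, h2⟩; exact ⟨[], h1, [], h2, rfl⟩
    · rintro ⟨x, hx, y, hy, h⟩
      rcases List.append_eq_nil_iff.mp h.symm with ⟨rfl, rfl⟩
      exact ⟨hx, hy⟩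
  | star r ih =>
    simp only [nullable, lang, Set.mem_setOf_eq, true_iff]
    exact ⟨[], by simp, rfl⟩
  | compl r ih =>
    simp only [nullable, lang, Set.mem_compl_iff, ← ih]
    cases nullable r <;> simp

lemma cons_mem_star_aux {D P : Type*} (den : P → Set D) (r : ERE P) (a : D) :
    ∀ (L : List (List D)) (v : List D), (∀ x ∈ L, x ∈ lang den r) →
      a :: v = L.flatten →
      ∃ x, a :: x ∈ lang den r ∧ ∃ y ∈ lang den (.star r), v = x ++ y := by
  intro L
  induction L with
  | nil => intro v _ h; simp at h
  | cons w L ih =>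
    intro v hmem hv
    rcases w with _ | ⟨b, w⟩
    · exact ih v (fun x hx => hmem x (List.mem_cons_of_mem _ hx)) (by simpa using hv)
    · simp only [List.flatten_cons, List.cons_append, List.cons.injEq] at hv
      obtain ⟨rfl, rfl⟩ := hv
      exact ⟨w, hmem _ List.mem_cons_self,
        L.flatten, ⟨L, fun x hx => hmem x (List.mem_cons_of_mem _ hx), rfl⟩, rfl⟩

lemma cons_mem_star {D P : Type*} (den : P → Set D) (r : ERE P) (a : D) (v : List D) :
    a :: v ∈ lang den (.star r) ↔
      ∃ x, a :: x ∈ lang den r ∧ ∃ y ∈ lang den (.star r), v = x ++ y := by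
  constructor
  · rintro ⟨L, hL, hv⟩
    exact cons_mem_star_aux den r a L v hL hv
  · rintro ⟨x, hx, y, hy, rfl⟩
    obtain ⟨L, hL, rfl⟩ := hy
    refine ⟨(a :: x) :: L, ?_, by simp⟩
    intro z hz
    rcases List.mem_cons.mp hz with rfl | hz
    · exact hx
    · exact hL z hz

/-- Symbolic regex derivatives are correct: the language of the leaf of
`δ(R)` for `a` is the `a`-derivative of the language of `R`. -/
theorem derive_correct {D P : Type*} (E : EBA D P) (R : ERE P) (a : D) :
    lang E.den (leafOf E (derive E R) a) = {v | a :: v ∈ lang E.den R} := by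
  induction R with
  | eps =>
    simp [derive, leafOf, lang, E.den_bot]
  | pred α =>
    simp only [derive, leafOf]
    split
    next h =>
      ext v
      simp only [lang, Set.mem_singleton_iff, Set.mem_setOf_eq]
      constructor
      · rintro rfl; exact ⟨a, h, rfl⟩
      · rintro ⟨b, hb, hv⟩
        simp only [List.cons.injEq] at hv
        exact hv.2
    next h =>
      ext v
      simp only [lang, E.den_bot, Set.mem_setOf_eq]
      constructor
      · rintro ⟨b, hb, _⟩; exact absurd hb (Set.notMem_empty b)
      · rintro ⟨b, hb, hv⟩
        simp only [List.cons.injEq] at hv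
        obtain ⟨rfl, -⟩ := hv
        exact absurd hb h
  | union r s ihr ihs =>
    simp only [derive, leafOf_liftBin, lang, ihr, ihs]
    ext v; simp [lang]
  | inter r s ihr ihs =>
    simp only [derive, leafOf_liftBin, lang, ihr, ihs]
    ext v; simp [lang]
  | compl r ih =>
    simp only [derive, leafOf_liftUn, lang, ih]
    ext v; simp [lang]
  | star r ih =>
    simp only [derive, leafOf_liftUn]
    ext v
    rw [Set.mem_setOf_eq, cons_mem_star]
    constructor
    · rintro ⟨x, hx, y, hy, rfl⟩
      rw [ih] at hx
      exact ⟨x, hx, y, hy, rfl⟩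
    · rintro ⟨x, hx, y, hy, rfl⟩
      have hx' : x ∈ lang E.den (leafOf E (derive E r) a) := by
        rw [ih]; exact hx
      exact ⟨x, hx', y, hy, rfl⟩
  | concat r s ihr ihs =>
    simp only [derive]
    by_cases hn : nullable r = true
    · rw [if_pos hn]
      simp only [leafOf_liftBin, leafOf_liftUn, lang, ihr, ihs]
      ext v
      simp only [Set.mem_union, Set.mem_setOf_eq]
      constructor
      · rintro (⟨x, hx, y, hy, rfl⟩ | hv)
        · exact ⟨a :: x, hx, y, hy, rfl⟩
        · exact ⟨[], (nullable_iff E.den r).mp hn, a :: v, hv, rfl⟩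
      · rintro ⟨x, hx, y, hy, hv⟩
        rcases x with _ | ⟨b, x⟩
        · right; simpa [hv] using hy
        · simp only [List.cons_append, List.cons.injEq] at hv
          obtain ⟨rfl, rfl⟩ := hv
          exact Or.inl ⟨x, hx, y, hy, rfl⟩
    · rw [if_neg hn]
      simp only [leafOf_liftUn, lang, ihr]
      ext v
      simp only [Set.mem_setOf_eq]
      constructor
      · rintro ⟨x, hx, y, hy, rfl⟩
        exact ⟨a :: x, hx, y, hy, rfl⟩
      · rintro ⟨x, hx, y, hy, hv⟩
        rcases x with _ | ⟨b, x⟩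
        · exact absurd ((nullable_iff E.den r).mpr hx) hn
        · simp only [List.cons_append, List.cons.injEq] at hv
          obtain ⟨rfl, rfl⟩ := hv
          exact ⟨x, hx, y, hy, rfl⟩
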